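/- Let d ≥ 2 be an integer and λ ∈ (0, π²/d). Set C = arctan((cos√(dλ) - e^D)/sin√(dλ)) for a given D ∈ ℝ. Then cos(C + √(dλ) r) > 0 for all r ∈ [0,1], the function u(r) = -√(dλ)·tan(C + √(dλ) r) is continuously differentiable on [0,1], satisfies u' = -u² - dλ on [0,1], and ∫₀¹ u(r) dr = D. -/

import Mathlib

open Real Set

theorem stmt_2 (d : ℕ) (hd : 2 ≤ d) (lam D : ℝ)
    (hlam : 0 < lam) (hlam' : lam < Real.pi ^ 2 / d)
    (s : ℝ) (hs : s = Real.sqrt (d * lam))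
    (C : ℝ) (hC : C = Real.arctan ((Real.cos s - Real.exp D) / Real.sin s))
    (u : ℝ → ℝ) (hu : u = fun r => -s * Real.tan (C + s * r)) :
    (∀ r ∈ Set.Icc (0:ℝ) 1, 0 < Real.cos (C + s * r)) ∧
    ContDiffOn ℝ 1 u (Set.Icc 0 1) ∧
    (∀ r ∈ Set.Icc (0:ℝ) 1,
      HasDerivWithinAt u (-(u r) ^ 2 - d * lam) (Set.Icc 0 1) r) ∧
    ∫ r in (0:ℝ)..1, u r = D := by
  have hd0 : (0:ℝ) < (d:ℝ) := by
    have : (2:ℝ) ≤ (d:ℝ) := by exact_mod_cast hd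
    linarith
  have hdl : 0 < (d:ℝ) * lam := mul_pos hd0 hlam
  have hdl2 : (d:ℝ) * lam < Real.pi ^ 2 := by
    have := (lt_div_iff₀ hd0).mp hlam'
    nlinarith
  have hs0 : 0 < s := by rw [hs]; exact Real.sqrt_pos.2 hdl
  have hsπ : s < Real.pi := by
    rw [hs]; exact (Real.sqrt_lt' Real.pi_pos).2 hdl2
  have hs2 : s ^ 2 = (d:ℝ) * lam := by rw [hs]; exact Real.sq_sqrt hdl.le
  have hsin : 0 < Real.sin s := Real.sin_pos_of_pos_of_lt_pi hs0 hsπ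
  have hCmem : C ∈ Set.Ioo (-(Real.pi/2)) (Real.pi/2) := by
    rw [hC]; exact ⟨Real.neg_pi_div_two_lt_arctan _, Real.arctan_lt_pi_div_two _⟩
  have hmem2 : Real.pi/2 - s ∈ Set.Ioo (-(Real.pi/2)) (Real.pi/2) :=
    ⟨by linarith, by linarith⟩
  have hCs : C + s < Real.pi/2 := by
    have htan : Real.tan C < Real.tan (Real.pi/2 - s) := by
      rw [hC, Real.tan_arctan, Real.tan_pi_div_two_sub, Real.tan_eq_sin_div_cos, inv_div]
      exact (div_lt_div_iff_of_pos_right hsin).2 (by linarith [Real.exp_pos D])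
    have := (Real.strictMonoOn_tan.lt_iff_lt hCmem hmem2).1 htan
    linarith
  have hcos : ∀ r ∈ Set.Icc (0:ℝ) 1, 0 < Real.cos (C + s * r) := by
    intro r hr
    apply Real.cos_pos_of_mem_Ioo
    constructor
    · have : 0 ≤ s * r := mul_nonneg hs0.le hr.1
      linarith [hCmem.1]
    · have : s * r ≤ s := by nlinarith [hr.2]
      linarith
  have hcosC : 0 < Real.cos C := Real.cos_pos_of_mem_Ioo hCmem
  have hcd : ContDiffOn ℝ 1 u (Set.Icc (0:ℝ) 1) := by
    rw [hu]
    intro x hx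
    have hc := (hcos x hx).ne'
    have h1 : ContDiffAt ℝ 1 (fun r : ℝ => C + s * r) x := by fun_prop
    have h2 : ContDiffAt ℝ 1 Real.tan (C + s * x) := Real.contDiffAt_tan.2 hc
    exact (contDiffAt_const.mul (h2.comp x h1)).contDiffWithinAt
  refine ⟨hcos, hcd, ?_, ?_⟩
  · -- derivative
    intro r hr
    have hc := (hcos r hr).ne'
    have h1 : HasDerivAt (fun x : ℝ => C + s * x) s r := by
      simpa using ((hasDerivAt_id r).const_mul s).const_add C
    have h2 : HasDerivAt Real.tan (1 / Real.cos (C + s * r) ^ 2) (C + s * r) :=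
      Real.hasDerivAt_tan hc
    have h3 := ((h2.comp r h1).const_mul (-s)).hasDerivWithinAt
      (s := Set.Icc (0:ℝ) 1)
    have heq : -(-s * Real.tan (C + s * r)) ^ 2 - (d:ℝ) * lam
        = -s * (1 / Real.cos (C + s * r) ^ 2 * s) := by
      rw [← hs2, Real.tan_eq_sin_div_cos]
      field_simp
      nlinarith [Real.sin_sq_add_cos_sq (C + s * r)]
    rw [hu]
    show HasDerivWithinAt (fun r => -s * Real.tan (C + s * r))
      (-(-s * Real.tan (C + s * r)) ^ 2 - (d:ℝ) * lam) (Set.Icc (0:ℝ) 1) r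
    rw [heq]
    exact h3
  · -- integral
    have hF : ∀ x ∈ Set.uIcc (0:ℝ) 1,
        HasDerivAt (fun r => Real.log (Real.cos (C + s * r))) (u x) x := by
      rw [Set.uIcc_of_le zero_le_one]
      intro x hx
      have hc := (hcos x hx).ne'
      have h1 : HasDerivAt (fun r : ℝ => C + s * r) s x := by
        simpa using ((hasDerivAt_id x).const_mul s).const_add C
      have h2 : HasDerivAt Real.cos (-Real.sin (C + s * x)) (C + s * x) :=
        Real.hasDerivAt_cos _
      have h4 : HasDerivAt (fun r => Real.log (Real.cos (C + s * r)))
          ((Real.cos (C + s * x))⁻¹ * (-Real.sin (C + s * x) * s)) x :=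
        by have h5 := (Real.hasDerivAt_log hc).comp x (h2.comp x h1); exact h5
      have heq : u x = (Real.cos (C + s * x))⁻¹ * (-Real.sin (C + s * x) * s) := by
        rw [hu]
        show -s * Real.tan (C + s * x) = _
        rw [Real.tan_eq_sin_div_cos, div_eq_mul_inv]
        ring
      rw [heq]
      exact h4
    have hint : IntervalIntegrable u MeasureTheory.volume 0 1 := by
      apply ContinuousOn.intervalIntegrable
      rw [Set.uIcc_of_le zero_le_one]
      exact hcd.continuousOn
    have hI := intervalIntegral.integral_eq_sub_of_hasDerivAt hF hint
    rw [hI]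
    have key : Real.cos (C + s) = Real.exp D * Real.cos C := by
      have htanC : Real.tan C = (Real.cos s - Real.exp D) / Real.sin s := by
        rw [hC, Real.tan_arctan]
      have hsinC : Real.sin C = Real.cos C * ((Real.cos s - Real.exp D) / Real.sin s) := by
        rw [← htanC, Real.tan_eq_sin_div_cos]
        field_simp
      rw [Real.cos_add, hsinC]
      field_simp
      ring
    simp only [mul_one, mul_zero, add_zero]
    rw [key, Real.log_mul (Real.exp_ne_zero D) hcosC.ne', Real.log_exp]
    ring
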